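/- For p symmetric n×n real matrices B_1,...,B_p, ∑_{r,s} N([B_r,B_s]) + ∑_{r,s} (tr(B_r B_s))^2 ≤ (1 + (1/2)·sgn(p−1)) · (∑_r N(B_r))^2, where N(A) = tr(A Aᵀ). In particular, for p = 1 the bound is (N(B_1))^2 and for p ≥ 2 the bound is (3/2)(∑_r N(B_r))^2. -/

import Mathlib

open Matrix Finset

section LiLiProof

variable {n p : ℕ}

/-- Frobenius inner product. -/
private def ipf {n : ℕ} (A B : Matrix (Fin n) (Fin n) ℝ) : ℝ := ∑ i, ∑ j, A i j * B i j

private lemma ipf_comm (A B : Matrix (Fin n) (Fin n) ℝ) : ipf A B = ipf B A := by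
  unfold ipf; congr 1; ext i; congr 1; ext j; ring

private lemma trace_mul_transpose' (A B : Matrix (Fin n) (Fin n) ℝ) :
    Matrix.trace (A * Bᵀ) = ipf A B := by
  simp [Matrix.trace, ipf, Matrix.mul_apply, Matrix.diag, Matrix.transpose_apply]

private lemma trace_mul_symm (A B : Matrix (Fin n) (Fin n) ℝ) (hB : B.IsSymm) :
    Matrix.trace (A * B) = ipf A B := by
  simp only [Matrix.trace, ipf, Matrix.mul_apply, Matrix.diag]
  refine Finset.sum_congr rfl fun i _ => Finset.sum_congr rfl fun j _ => ?_
  rw [hB.apply j i]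

private lemma ipf_self_nonneg (A : Matrix (Fin n) (Fin n) ℝ) : 0 ≤ ipf A A := by
  apply Finset.sum_nonneg; intro i _
  exact Finset.sum_nonneg fun j _ => mul_self_nonneg _

private lemma ipf_self_eq_zero {A : Matrix (Fin n) (Fin n) ℝ} (h : ipf A A = 0) : A = 0 := by
  ext i j
  have h1 : ∀ k ∈ (univ : Finset (Fin n)), (0:ℝ) ≤ ∑ l, A k l * A k l :=
    fun k _ => Finset.sum_nonneg fun l _ => mul_self_nonneg _
  have h2 := (Finset.sum_eq_zero_iff_of_nonneg h1).1 h i (mem_univ i)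
  have h3 : ∀ l ∈ (univ : Finset (Fin n)), (0:ℝ) ≤ A i l * A i l :=
    fun l _ => mul_self_nonneg _
  have h4 := (Finset.sum_eq_zero_iff_of_nonneg h3).1 h2 j (mem_univ j)
  have := mul_self_eq_zero.mp h4
  simpa using this

private def chi {n : ℕ} (A B : Matrix (Fin n) (Fin n) ℝ) : ℝ := ipf (A*B - B*A) (A*B - B*A)

private lemma chi_comm (A B : Matrix (Fin n) (Fin n) ℝ) : chi A B = chi B A := by
  unfold chi ipf; congr 1; ext i; congr 1; ext j
  simp [Matrix.sub_apply]; ring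

private lemma chi_self (A : Matrix (Fin n) (Fin n) ℝ) : chi A A = 0 := by
  simp [chi, ipf]

private lemma chi_zero_right (A : Matrix (Fin n) (Fin n) ℝ) : chi A 0 = 0 := by
  simp [chi, ipf]

private lemma ipf_sum_left {ι : Type*} (s : Finset ι) (f : ι → Matrix (Fin n) (Fin n) ℝ)
    (C : Matrix (Fin n) (Fin n) ℝ) : ipf (∑ x ∈ s, f x) C = ∑ x ∈ s, ipf (f x) C := by
  unfold ipf
  simp only [Matrix.sum_apply, Finset.sum_mul]
  rw [show (∑ i, ∑ j, ∑ x ∈ s, f x i j * C i j) = ∑ i, ∑ x ∈ s, ∑ j, f x i j * C i j from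
    Finset.sum_congr rfl fun i _ => Finset.sum_comm]
  exact Finset.sum_comm

private lemma ipf_sum_right {ι : Type*} (s : Finset ι) (f : ι → Matrix (Fin n) (Fin n) ℝ)
    (C : Matrix (Fin n) (Fin n) ℝ) : ipf C (∑ x ∈ s, f x) = ∑ x ∈ s, ipf C (f x) := by
  unfold ipf
  simp only [Matrix.sum_apply, Finset.mul_sum]
  rw [show (∑ i, ∑ j, ∑ x ∈ s, C i j * f x i j) = ∑ i, ∑ x ∈ s, ∑ j, C i j * f x i j from
    Finset.sum_congr rfl fun i _ => Finset.sum_comm]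
  exact Finset.sum_comm

private lemma ipf_smul_left (c : ℝ) (A B : Matrix (Fin n) (Fin n) ℝ) :
    ipf (c • A) B = c * ipf A B := by
  unfold ipf
  rw [Finset.mul_sum]
  refine Finset.sum_congr rfl fun i _ => ?_
  rw [Finset.mul_sum]
  refine Finset.sum_congr rfl fun j _ => ?_
  simp [Matrix.smul_apply]; ring

private lemma ipf_smul_right (c : ℝ) (A B : Matrix (Fin n) (Fin n) ℝ) :
    ipf A (c • B) = c * ipf A B := by
  unfold ipf
  rw [Finset.mul_sum]
  refine Finset.sum_congr rfl fun i _ => ?_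
  rw [Finset.mul_sum]
  refine Finset.sum_congr rfl fun j _ => ?_
  simp [Matrix.smul_apply]; ring

private lemma ipf_sub_left (A B C : Matrix (Fin n) (Fin n) ℝ) :
    ipf (A - B) C = ipf A C - ipf B C := by
  unfold ipf
  rw [← Finset.sum_sub_distrib]
  refine Finset.sum_congr rfl fun i _ => ?_
  rw [← Finset.sum_sub_distrib]
  refine Finset.sum_congr rfl fun j _ => ?_
  simp [Matrix.sub_apply]; ring

private lemma ipf_sub_right (A B C : Matrix (Fin n) (Fin n) ℝ) :
    ipf C (A - B) = ipf C A - ipf C B := by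
  unfold ipf
  rw [← Finset.sum_sub_distrib]
  refine Finset.sum_congr rfl fun i _ => ?_
  rw [← Finset.sum_sub_distrib]
  refine Finset.sum_congr rfl fun j _ => ?_
  simp [Matrix.sub_apply]; ring

section conj
variable (Q R : Matrix (Fin n) (Fin n) ℝ)

private lemma lil_cancel (hQR : Q * R = 1) (Z : Matrix (Fin n) (Fin n) ℝ) :
    Q * (R * Z) = Z := by
  rw [← Matrix.mul_assoc, hQR, Matrix.one_mul]

private lemma lil_trace_conj (hQR : Q * R = 1) (X : Matrix (Fin n) (Fin n) ℝ) :
    Matrix.trace (R * X * Q) = Matrix.trace X := by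
  rw [Matrix.trace_mul_comm, ← Matrix.mul_assoc, hQR, Matrix.one_mul]

private lemma lil_conj_transpose (hR : ∀ i j, R i j = Q j i) (X : Matrix (Fin n) (Fin n) ℝ) :
    (R * X * Q)ᵀ = R * Xᵀ * Q := by
  rw [Matrix.transpose_mul, Matrix.transpose_mul]
  have h1 : Qᵀ = R := by ext i j; simp [Matrix.transpose_apply, hR]
  have h2 : Rᵀ = Q := by ext i j; simp [Matrix.transpose_apply, hR]
  rw [h1, h2, Matrix.mul_assoc]

private lemma lil_conj_mul (hQR : Q * R = 1) (X Y : Matrix (Fin n) (Fin n) ℝ) :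
    (R * X * Q) * (R * Y * Q) = R * (X * Y) * Q := by
  simp only [Matrix.mul_assoc, lil_cancel Q R hQR]

private lemma lil_ipf_conj (hQR : Q * R = 1) (hR : ∀ i j, R i j = Q j i)
    (X Y : Matrix (Fin n) (Fin n) ℝ) : ipf (R * X * Q) (R * Y * Q) = ipf X Y := by
  have ht : ∀ (A B : Matrix (Fin n) (Fin n) ℝ), ipf A B = Matrix.trace (A * Bᵀ) := by
    intro A B
    simp [Matrix.trace, ipf, Matrix.mul_apply, Matrix.diag, Matrix.transpose_apply]
  rw [ht, ht, lil_conj_transpose Q R hR, lil_conj_mul Q R hQR, lil_trace_conj Q R hQR]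

private lemma chi_conj (hQR : Q * R = 1)
    (hR : ∀ i j, R i j = Q j i) (X Y : Matrix (Fin n) (Fin n) ℝ) :
    chi (R * X * Q) (R * Y * Q) = chi X Y := by
  unfold chi
  rw [lil_conj_mul Q R hQR, lil_conj_mul Q R hQR, ← Matrix.sub_mul, ← Matrix.mul_sub,
    lil_ipf_conj Q R hQR hR]

end conj

section collapse
variable (W : Matrix (Fin p) (Fin p) ℝ)
  (hW : ∀ a b, (∑ r, W a r * W b r) = if a = b then (1:ℝ) else 0)

include hW

private lemma collapse2 (S : Fin p → Fin p → ℝ) :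
    ∑ r, ∑ a, ∑ b, (W a r * W b r) * S a b = ∑ a, S a a := by
  have step1 : ∑ r, ∑ a, ∑ b, (W a r * W b r) * S a b
      = ∑ a, ∑ b, ∑ r, (W a r * W b r) * S a b := by
    rw [Finset.sum_comm]
    exact Finset.sum_congr rfl fun a _ => Finset.sum_comm
  rw [step1]
  have step2 : ∀ a b, ∑ r, (W a r * W b r) * S a b = (if a = b then (1:ℝ) else 0) * S a b := by
    intro a b
    rw [← Finset.sum_mul, hW]
  calc ∑ a, ∑ b, ∑ r, (W a r * W b r) * S a b
      = ∑ a, ∑ b, (if a = b then (1:ℝ) else 0) * S a b :=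
        Finset.sum_congr rfl fun a _ => Finset.sum_congr rfl fun b _ => step2 a b
    _ = ∑ a, S a a := by
        refine Finset.sum_congr rfl fun a _ => ?_
        rw [Finset.sum_eq_single a]
        · simp
        · intro b _ hb; simp [Ne.symm hb]
        · intro h; exact absurd (Finset.mem_univ a) h

private lemma collapse1 (c e : Fin p → ℝ) :
    ∑ r, (∑ a, W a r * c a) * (∑ b, W b r * e b) = ∑ a, c a * e a := by
  have expand : ∀ r, (∑ a, W a r * c a) * (∑ b, W b r * e b)
      = ∑ a, ∑ b, (W a r * W b r) * (c a * e b) := by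
    intro r
    rw [Finset.sum_mul_sum]
    exact Finset.sum_congr rfl fun a _ => Finset.sum_congr rfl fun b _ => by ring
  rw [Finset.sum_congr rfl fun r _ => expand r, collapse2 W hW]

private lemma collapseX (X : Fin p → Fin p → Fin p → Fin p → ℝ) :
    ∑ r, ∑ s, ∑ a, ∑ b, ∑ c, ∑ d, ((W a r * W b s) * (W c r * W d s)) * X a b c d
      = ∑ a, ∑ b, X a b a b := by
  have inner : ∀ r s, (∑ a, ∑ b, ∑ c, ∑ d, ((W a r * W b s) * (W c r * W d s)) * X a b c d)
      = ∑ a, ∑ c, (W a r * W c r) * (∑ b, ∑ d, (W b s * W d s) * X a b c d) := by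
    intro r s
    refine Finset.sum_congr rfl fun a _ => ?_
    rw [Finset.sum_comm]
    refine Finset.sum_congr rfl fun c _ => ?_
    rw [Finset.mul_sum]
    refine Finset.sum_congr rfl fun b _ => ?_
    rw [Finset.mul_sum]
    refine Finset.sum_congr rfl fun d _ => ?_
    ring
  calc ∑ r, ∑ s, ∑ a, ∑ b, ∑ c, ∑ d, ((W a r * W b s) * (W c r * W d s)) * X a b c d
      = ∑ s, ∑ r, ∑ a, ∑ c, (W a r * W c r) * (∑ b, ∑ d, (W b s * W d s) * X a b c d) := by
        rw [Finset.sum_comm]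
        exact Finset.sum_congr rfl fun s _ => Finset.sum_congr rfl fun r _ => inner r s
    _ = ∑ s, ∑ a, ∑ b, ∑ d, (W b s * W d s) * X a b a d := by
        refine Finset.sum_congr rfl fun s _ => ?_
        rw [collapse2 W hW (fun a c => ∑ b, ∑ d, (W b s * W d s) * X a b c d)]
    _ = ∑ a, ∑ b, X a b a b := by
        rw [Finset.sum_comm]
        refine Finset.sum_congr rfl fun a _ => ?_
        rw [collapse2 W hW (fun b d => X a b a d)]

end collapse

section rot
variable (W : Matrix (Fin p) (Fin p) ℝ) (B : Fin p → Matrix (Fin n) (Fin n) ℝ)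

/-- rotated family -/
private def rotB {n p : ℕ} (W : Matrix (Fin p) (Fin p) ℝ)
    (B : Fin p → Matrix (Fin n) (Fin n) ℝ)
    (r : Fin p) : Matrix (Fin n) (Fin n) ℝ := ∑ t, W t r • B t

private lemma rotB_isSymm (hs : ∀ t, (B t).IsSymm) (r : Fin p) : (rotB W B r).IsSymm := by
  unfold rotB Matrix.IsSymm
  rw [Matrix.transpose_sum]
  refine Finset.sum_congr rfl fun t _ => ?_
  rw [Matrix.transpose_smul, (hs t).eq]

private lemma ipf_rotB (r s : Fin p) :
    ipf (rotB W B r) (rotB W B s) = ∑ a, ∑ b, (W a r * W b s) * ipf (B a) (B b) := by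
  unfold rotB
  rw [ipf_sum_left]
  refine Finset.sum_congr rfl fun a _ => ?_
  rw [ipf_smul_left, ipf_sum_right, Finset.mul_sum]
  refine Finset.sum_congr rfl fun b _ => ?_
  rw [ipf_smul_right]; ring

private lemma mul_rotB (r s : Fin p) :
    rotB W B r * rotB W B s = ∑ a, ∑ b, (W a r * W b s) • (B a * B b) := by
  unfold rotB
  rw [Finset.sum_mul]
  refine Finset.sum_congr rfl fun a _ => ?_
  rw [Finset.mul_sum]
  refine Finset.sum_congr rfl fun b _ => ?_
  rw [Matrix.smul_mul, Matrix.mul_smul, smul_smul]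

private lemma comm_rotB (r s : Fin p) :
    rotB W B r * rotB W B s - rotB W B s * rotB W B r
      = ∑ a, ∑ b, (W a r * W b s) • (B a * B b - B b * B a) := by
  rw [mul_rotB, mul_rotB]
  have swap : (∑ a, ∑ b, (W a s * W b r) • (B a * B b))
      = ∑ a, ∑ b, (W a r * W b s) • (B b * B a) := by
    rw [Finset.sum_comm]
    refine Finset.sum_congr rfl fun a _ => Finset.sum_congr rfl fun b _ => ?_
    rw [mul_comm]
  rw [swap, ← Finset.sum_sub_distrib]
  refine Finset.sum_congr rfl fun a _ => ?_
  rw [← Finset.sum_sub_distrib]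
  refine Finset.sum_congr rfl fun b _ => ?_
  rw [smul_sub]

private lemma chi_rotB (r s : Fin p) :
    chi (rotB W B r) (rotB W B s)
      = ∑ a, ∑ b, ∑ c, ∑ d, ((W a r * W b s) * (W c r * W d s))
          * ipf (B a * B b - B b * B a) (B c * B d - B d * B c) := by
  unfold chi
  rw [comm_rotB, ipf_sum_left]
  refine Finset.sum_congr rfl fun a _ => ?_
  rw [ipf_sum_left]
  refine Finset.sum_congr rfl fun b _ => ?_
  rw [ipf_smul_left, ipf_sum_right, Finset.mul_sum]
  refine Finset.sum_congr rfl fun c _ => ?_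
  rw [ipf_sum_right, Finset.mul_sum]
  refine Finset.sum_congr rfl fun d _ => ?_
  rw [ipf_smul_right]; ring

variable (hW : ∀ a b, (∑ r, W a r * W b r) = if a = b then (1:ℝ) else 0)
include hW

private lemma tau_rot : ∑ r, ipf (rotB W B r) (rotB W B r) = ∑ a, ipf (B a) (B a) := by
  rw [Finset.sum_congr rfl (fun r _ => ipf_rotB W B r r)]
  exact collapse2 W hW _

private lemma y_rot : ∑ r, ∑ s, (ipf (rotB W B r) (rotB W B s))^2
    = ∑ a, ∑ b, (ipf (B a) (B b))^2 := by
  have hform : ∀ r s, (ipf (rotB W B r) (rotB W B s))^2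
      = (∑ a, W a r * (∑ b, W b s * ipf (B a) (B b)))
        * (∑ a, W a r * (∑ b, W b s * ipf (B a) (B b))) := by
    intro r s
    rw [ipf_rotB]
    have : (∑ a, ∑ b, (W a r * W b s) * ipf (B a) (B b))
        = ∑ a, W a r * (∑ b, W b s * ipf (B a) (B b)) := by
      refine Finset.sum_congr rfl fun a _ => ?_
      rw [Finset.mul_sum]
      exact Finset.sum_congr rfl fun b _ => by ring
    rw [this]; ring
  calc ∑ r, ∑ s, (ipf (rotB W B r) (rotB W B s))^2
      = ∑ s, ∑ r, (∑ a, W a r * (∑ b, W b s * ipf (B a) (B b)))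
          * (∑ a, W a r * (∑ b, W b s * ipf (B a) (B b))) := by
        rw [Finset.sum_comm]
        exact Finset.sum_congr rfl fun s _ => Finset.sum_congr rfl fun r _ => hform r s
    _ = ∑ s, ∑ a, (∑ b, W b s * ipf (B a) (B b)) * (∑ b, W b s * ipf (B a) (B b)) := by
        refine Finset.sum_congr rfl fun s _ => ?_
        exact collapse1 W hW _ _
    _ = ∑ a, ∑ s, (∑ b, W b s * ipf (B a) (B b)) * (∑ b, W b s * ipf (B a) (B b)) :=
        Finset.sum_comm
    _ = ∑ a, ∑ b, ipf (B a) (B b) * ipf (B a) (B b) := by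
        refine Finset.sum_congr rfl fun a _ => ?_
        exact collapse1 W hW _ _
    _ = ∑ a, ∑ b, (ipf (B a) (B b))^2 := by
        refine Finset.sum_congr rfl fun a _ => Finset.sum_congr rfl fun b _ => by ring

private lemma K_rot : ∑ r, ∑ s, chi (rotB W B r) (rotB W B s)
    = ∑ a, ∑ b, chi (B a) (B b) := by
  have h1 : ∑ r, ∑ s, chi (rotB W B r) (rotB W B s)
      = ∑ r, ∑ s, ∑ a, ∑ b, ∑ c, ∑ d, ((W a r * W b s) * (W c r * W d s))
          * ipf (B a * B b - B b * B a) (B c * B d - B d * B c) :=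
    Finset.sum_congr rfl fun r _ => Finset.sum_congr rfl fun s _ => chi_rotB W B r s
  rw [h1, collapseX W hW]
  rfl

end rot

private lemma real_isHermitian_of_isSymm' {m : ℕ} (S : Matrix (Fin m) (Fin m) ℝ)
    (hS : S.IsSymm) : S.IsHermitian := by
  unfold Matrix.IsHermitian
  ext i j
  rw [Matrix.conjTranspose_apply, star_trivial, hS.apply i j]

private lemma exists_gram_diag {m : ℕ} (S : Matrix (Fin m) (Fin m) ℝ) (hS : S.IsSymm) :
    ∃ W : Matrix (Fin m) (Fin m) ℝ,
      (∀ a b, (∑ r, W a r * W b r) = if a = b then (1:ℝ) else 0) ∧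
      (∀ r s, r ≠ s → (∑ a, ∑ b, (W a r * W b s) * S a b) = 0) := by
  have hH : S.IsHermitian := real_isHermitian_of_isSymm' S hS
  classical
  set W : Matrix (Fin m) (Fin m) ℝ :=
    (Matrix.IsHermitian.eigenvectorUnitary hH : Matrix (Fin m) (Fin m) ℝ) with hWdef
  have hmem : W ∈ Matrix.unitaryGroup (Fin m) ℝ := (Matrix.IsHermitian.eigenvectorUnitary hH).2
  have hWW : W * star W = 1 := Matrix.mem_unitaryGroup_iff.mp hmem
  have hdiag : star W * S * W = Matrix.diagonal (RCLike.ofReal ∘ hH.eigenvalues) := by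
    have := Matrix.IsHermitian.conjStarAlgAut_star_eigenvectorUnitary hH
    rwa [Unitary.conjStarAlgAut_star_apply] at this
  refine ⟨W, ?_, ?_⟩
  · intro a b
    have := congrFun (congrFun hWW a) b
    rw [Matrix.mul_apply] at this
    simp only [Matrix.star_apply, star_trivial] at this
    rw [Matrix.one_apply] at this
    convert this using 1
  · intro r s hrs
    have h1 : (star W * S * W) r s = ∑ a, ∑ b, (W a r * W b s) * S a b := by
      rw [Matrix.mul_apply]
      rw [show (∑ b, (star W * S) r b * W b s)
          = ∑ b, ∑ a, (W a r * S a b) * W b s from Finset.sum_congr rfl fun b _ => by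
        rw [Matrix.mul_apply, Finset.sum_mul]
        exact Finset.sum_congr rfl fun a _ => by
          rw [Matrix.star_apply, star_trivial]]
      rw [Finset.sum_comm]
      exact Finset.sum_congr rfl fun a _ => Finset.sum_congr rfl fun b _ => by ring
    rw [← h1, hdiag, Matrix.diagonal_apply_ne _ hrs]

private lemma bessel {ι : Type*} (s : Finset ι) (C : ι → Matrix (Fin n) (Fin n) ℝ)
    (horth : ∀ i ∈ s, ∀ j ∈ s, i ≠ j → ipf (C i) (C j) = 0)
    (hpos : ∀ i ∈ s, 0 < ipf (C i) (C i))
    (u : Matrix (Fin n) (Fin n) ℝ) :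
    ∑ i ∈ s, (ipf (C i) u)^2 / ipf (C i) (C i) ≤ ipf u u := by
  classical
  set w : Matrix (Fin n) (Fin n) ℝ := ∑ i ∈ s, (ipf (C i) u / ipf (C i) (C i)) • C i with hw
  have huw : ipf u w = ∑ i ∈ s, (ipf (C i) u)^2 / ipf (C i) (C i) := by
    rw [hw, ipf_sum_right]
    refine Finset.sum_congr rfl fun i hi => ?_
    rw [ipf_smul_right, ipf_comm u (C i)]
    field_simp
  have hwu : ipf w u = ∑ i ∈ s, (ipf (C i) u)^2 / ipf (C i) (C i) := by
    rw [ipf_comm, huw]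
  have hww : ipf w w = ∑ i ∈ s, (ipf (C i) u)^2 / ipf (C i) (C i) := by
    rw [hw, ipf_sum_left]
    have : ∀ i ∈ s, ipf ((ipf (C i) u / ipf (C i) (C i)) • C i)
        (∑ j ∈ s, (ipf (C j) u / ipf (C j) (C j)) • C j)
        = (ipf (C i) u)^2 / ipf (C i) (C i) := by
      intro i hi
      rw [ipf_smul_left, ipf_sum_right]
      rw [Finset.sum_eq_single i]
      · rw [ipf_smul_right]
        have hNi := (hpos i hi).ne'
        field_simp
      · intro j hj hne
        rw [ipf_smul_right, horth i hi j hj (Ne.symm hne)]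
        ring
      · intro h; exact absurd hi h
    exact Finset.sum_congr rfl this
  have h0 : 0 ≤ ipf (u - w) (u - w) := ipf_self_nonneg _
  rw [ipf_sub_left, ipf_sub_right, ipf_sub_right, huw, hwu, hww] at h0
  linarith

-- Final Spectral Lemma (star lemma)
private lemma FSL {n : ℕ} (d : Fin n → ℝ) (β : ℝ) (hβ : 0 < β) (hβN : β ≤ ∑ i, d i ^ 2) :
    ∑ i, ∑ j, max ((d i - d j)^2 - (2 * (∑ k, d k ^ 2) - β)) 0 ≤ 2 * β := by
  classical
  set N1 : ℝ := ∑ k, d k ^ 2 with hN1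
  set cut : ℝ := 2 * N1 - β with hcut
  have hcutpos : 0 < cut := by
    have : β ≤ N1 := hβN
    simp only [hcut]; linarith
  have hcutN1 : N1 ≤ cut := by simp only [hcut]; linarith
  set f : Fin n → Fin n → ℝ := fun i j => max ((d i - d j)^2 - cut) 0 with hf
  have hfnonneg : ∀ i j, 0 ≤ f i j := fun i j => le_max_right _ _
  have hfsymm : ∀ i j, f i j = f j i := by
    intro i j; simp only [hf]; ring_nf
  set P : Fin n → Fin n → Prop := fun i j => cut < (d i - d j)^2 with hP
  have hfzero : ∀ i j, ¬ P i j → f i j = 0 := by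
    intro i j h
    simp only [hP, not_lt] at h
    simp only [hf]
    exact max_eq_right (by linarith)
  have hfval : ∀ i j, P i j → f i j = (d i - d j)^2 - cut := by
    intro i j h
    simp only [hP] at h
    simp only [hf]
    exact max_eq_left (by linarith)
  -- pair of squares bounded by N1
  have pair_le : ∀ i j, i ≠ j → d i ^2 + d j ^2 ≤ N1 := by
    intro i j hij
    have : ({i, j} : Finset (Fin n)) ⊆ univ := subset_univ _
    have hsum := Finset.sum_le_sum_of_subset_of_nonneg this
      (fun k _ _ => sq_nonneg (d k))
    rwa [Finset.sum_pair hij] at hsum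
  have Pne : ∀ i j, P i j → i ≠ j := by
    intro i j h
    rintro rfl
    simp only [hP] at h
    simp at h
    linarith
  have Psign : ∀ i j, P i j → d i * d j < 0 := by
    intro i j h
    have hij := Pne i j h
    have h2 := pair_le i j hij
    simp only [hP] at h
    nlinarith
  have Phalf : ∀ i j, P i j → N1 < 2*(d i^2 + d j^2) := by
    intro i j h
    simp only [hP] at h
    nlinarith [sq_nonneg (d i + d j)]
  have Psymm : ∀ i j, P i j → P j i := by
    intro i j h
    simp only [hP] at h ⊢
    nlinarith
  have Ptri : ∀ a b c, P a b → P b c → P a c → False := by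
    intro a b c h1 h2 h3
    have s1 := Psign a b h1
    have s2 := Psign b c h2
    have s3 := Psign a c h3
    have e1 : (d a * d b) * (d b * d c) = (d b)^2 * (d a * d c) := by ring
    have e2 : 0 < (d a * d b) * (d b * d c) := mul_pos_of_neg_of_neg s1 s2
    have e3 : (d b)^2 * (d a * d c) ≤ 0 :=
      mul_nonpos_of_nonneg_of_nonpos (sq_nonneg _) (le_of_lt s3)
    rw [e1] at e2
    linarith
  have Pdisj : ∀ i j k l, P i j → P k l → i ≠ k → i ≠ l → j ≠ k → j ≠ l → False := by
    intro i j k l h1 h2 hik hil hjk hjl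
    have hij := Pne i j h1
    have hkl := Pne k l h2
    have h1' := Phalf i j h1
    have h2' := Phalf k l h2
    have hsub : ({i, j, k, l} : Finset (Fin n)) ⊆ univ := subset_univ _
    have hsum := Finset.sum_le_sum_of_subset_of_nonneg hsub
      (fun m _ _ => sq_nonneg (d m))
    have hcard : ∑ m ∈ ({i, j, k, l} : Finset (Fin n)), d m ^2
        = d i^2 + d j^2 + d k^2 + d l^2 := by
      rw [Finset.sum_insert (by simp [hij, hik, hil]),
          Finset.sum_insert (by simp [hjk, hjl]),
          Finset.sum_pair hkl]
      ring
    rw [hcard] at hsum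
    have : ∑ m ∈ (univ : Finset (Fin n)), d m ^2 = N1 := rfl
    linarith
  by_cases hex : ∃ i j, P i j
  · obtain ⟨i0, j0, hP0⟩ := hex
    -- common vertex
    have hv : ∃ v, ∀ i j, P i j → i = v ∨ j = v := by
      by_cases hall : ∀ i j, P i j → i = i0 ∨ j = i0
      · exact ⟨i0, hall⟩
      · push_neg at hall
        obtain ⟨c, e, hPce, hc, he⟩ := hall
        refine ⟨j0, ?_⟩
        intro x y hPxy
        by_contra hcon
        push_neg at hcon
        obtain ⟨hx, hy⟩ := hcon
        -- j0 ∈ {c, e}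
        have hj0ce : j0 = c ∨ j0 = e := by
          by_contra hcon2
          push_neg at hcon2
          exact Pdisj i0 j0 c e hP0 hPce (Ne.symm hc) (Ne.symm he) hcon2.1 hcon2.2
        -- orient edge (c,e) as (j0, ff)
        obtain ⟨ff, hPj0f, hfne⟩ : ∃ ff, P j0 ff ∧ ff ≠ i0 := by
          rcases hj0ce with h | h
          · exact ⟨e, by rw [h]; exact hPce, he⟩
          · exact ⟨c, by rw [h]; exact Psymm c e hPce, hc⟩
        -- (x,y) must meet {i0,j0}: since not j0, contains i0
        have hxyi0 : x = i0 ∨ y = i0 := by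
          by_contra hcon3
          push_neg at hcon3
          exact Pdisj x y i0 j0 hPxy hP0 hcon3.1 hx hcon3.2 hy
        -- (x,y) must meet {j0,ff}: since not j0, contains ff
        have hxyf : x = ff ∨ y = ff := by
          by_contra hcon4
          push_neg at hcon4
          exact Pdisj x y j0 ff hPxy hPj0f hx hcon4.1 hy hcon4.2
        -- then P i0 ff (up to orientation), triangle i0-j0-ff
        have hPif : P i0 ff := by
          rcases hxyi0 with hxi | hyi
          · rcases hxyf with hxf | hyf
            · exact absurd (by rw [← hxf, hxi]) hfne
            · rw [← hxi, ← hyf]; exact hPxy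
          · rcases hxyf with hxf | hyf
            · have hsymm2 := Psymm x y hPxy
              rw [← hyi, ← hxf]; exact hsymm2
            · exact absurd (by rw [← hyf, hyi]) hfne
        exact Ptri i0 j0 ff hP0 hPj0f (hPif)
    obtain ⟨v, hv⟩ := hv
    -- star bound
    have star_bound : ∑ j ∈ univ.erase v, f v j ≤ β := by
      set J : Finset (Fin n) := (univ.erase v).filter (fun j => P v j) with hJ
      have hsum_eq : ∑ j ∈ univ.erase v, f v j = ∑ j ∈ J, ((d v - d j)^2 - cut) := by
        rw [← Finset.sum_filter_add_sum_filter_not (univ.erase v) (fun j => P v j) (f v)]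
        have h2 : ∑ j ∈ (univ.erase v).filter (fun j => ¬ P v j), f v j = 0 :=
          Finset.sum_eq_zero fun j hj => hfzero v j (Finset.mem_filter.mp hj).2
        rw [h2, add_zero]
        exact Finset.sum_congr rfl fun j hj => hfval v j (Finset.mem_filter.mp hj).2
      rw [hsum_eq]
      rcases Finset.eq_empty_or_nonempty J with hJe | hJne
      · rw [hJe]; simp; linarith
      · set k : ℕ := J.card with hk
        have hk1 : (1:ℝ) ≤ (k:ℝ) := by
          have := Finset.card_pos.mpr hJne
          exact_mod_cast this
        have hvJ : v ∉ J := by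
          simp only [hJ, Finset.mem_filter, Finset.mem_erase]
          rintro ⟨⟨h, _⟩, _⟩; exact h rfl
        -- sum of squares over J ∪ {v}
        have hmass : d v^2 + ∑ j ∈ J, d j^2 ≤ N1 := by
          have hsub : insert v J ⊆ univ := subset_univ _
          have := Finset.sum_le_sum_of_subset_of_nonneg hsub
            (fun m _ _ => sq_nonneg (d m))
          rwa [Finset.sum_insert hvJ] at this
        have hCS : (∑ j ∈ J, d j)^2 ≤ (k:ℝ) * ∑ j ∈ J, d j^2 := by
          have := sq_sum_le_card_mul_sum_sq (s := J) (f := d)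
          exact_mod_cast this
        have hexp : ∑ j ∈ J, (d v - d j)^2
            = (k:ℝ) * d v^2 - 2 * d v * (∑ j ∈ J, d j) + ∑ j ∈ J, d j^2 := by
          calc ∑ j ∈ J, (d v - d j)^2
              = ∑ j ∈ J, (d v^2 - 2*d v*d j + d j^2) :=
                Finset.sum_congr rfl (fun j _ => by ring)
            _ = (∑ _j ∈ J, d v^2) - (∑ j ∈ J, 2*d v*d j) + ∑ j ∈ J, d j^2 := by
                rw [Finset.sum_add_distrib, Finset.sum_sub_distrib]
            _ = (k:ℝ) * d v^2 - 2 * d v * (∑ j ∈ J, d j) + ∑ j ∈ J, d j^2 := by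
                rw [Finset.sum_const, ← Finset.mul_sum, nsmul_eq_mul, hk]
        have hsq : ∑ j ∈ J, (d v - d j)^2 ≤ ((k:ℝ)+1) * N1 := by
          have hab : 2 * |d v| * |∑ j ∈ J, d j| ≤ d v^2 + (∑ j ∈ J, d j)^2 := by
            nlinarith [sq_nonneg (|d v| - |∑ j ∈ J, d j|), sq_abs (d v),
              sq_abs (∑ j ∈ J, d j)]
          have hab2 : - (2 * d v * (∑ j ∈ J, d j)) ≤ d v^2 + (k:ℝ) * ∑ j ∈ J, d j^2 := by
            have h1 : - (2 * d v * (∑ j ∈ J, d j)) ≤ 2 * |d v| * |∑ j ∈ J, d j| := by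
              have := abs_mul (d v) (∑ j ∈ J, d j)
              have h2 := neg_abs_le (d v * (∑ j ∈ J, d j))
              nlinarith [abs_nonneg (d v), abs_nonneg (∑ j ∈ J, d j)]
            linarith
          rw [hexp]
          nlinarith
        calc ∑ j ∈ J, ((d v - d j)^2 - cut)
            = (∑ j ∈ J, (d v - d j)^2) - (k:ℝ) * cut := by
              rw [Finset.sum_sub_distrib, Finset.sum_const]
              simp [hk]
          _ ≤ ((k:ℝ)+1) * N1 - (k:ℝ)*(2*N1 - β) := by
              rw [← hcut]; linarith
          _ = (k:ℝ)*β - ((k:ℝ)-1)*N1 := by ring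
          _ ≤ (k:ℝ)*β - ((k:ℝ)-1)*β := by nlinarith
          _ = β := by ring
    -- assemble total
    have htotal : ∑ i, ∑ j, f i j = (∑ j ∈ univ.erase v, f v j) + ∑ i ∈ univ.erase v, f i v := by
      rw [← Finset.add_sum_erase (univ : Finset (Fin n)) (fun i => ∑ j, f i j) (mem_univ v)]
      have hrow : ∑ j, f v j = ∑ j ∈ univ.erase v, f v j := by
        rw [← Finset.add_sum_erase (univ : Finset (Fin n)) (f v) (mem_univ v)]
        rw [hfzero v v (fun h => (Pne v v h) rfl), zero_add]
      have hcol : ∀ i ∈ univ.erase v, ∑ j, f i j = f i v := by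
        intro i hi
        have hiv : i ≠ v := (Finset.mem_erase.mp hi).1
        rw [← Finset.add_sum_erase (univ : Finset (Fin n)) (f i) (mem_univ v)]
        have : ∑ j ∈ univ.erase v, f i j = 0 := by
          apply Finset.sum_eq_zero
          intro j hj
          have hjv : j ≠ v := (Finset.mem_erase.mp hj).1
          apply hfzero
          intro hPij
          rcases hv i j hPij with h | h
          · exact hiv h
          · exact hjv h
        rw [this, add_zero]
      rw [hrow, Finset.sum_congr rfl hcol]
    rw [htotal]
    have hcoleq : ∑ i ∈ univ.erase v, f i v ≤ β := by
      have : ∑ i ∈ univ.erase v, f i v = ∑ i ∈ univ.erase v, f v i :=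
        Finset.sum_congr rfl fun i _ => hfsymm i v
      rw [this]; exact star_bound
    linarith [star_bound]
  · push_neg at hex
    have : ∑ i, ∑ j, f i j = 0 :=
      Finset.sum_eq_zero fun i _ => Finset.sum_eq_zero fun j _ => hfzero i j (hex i j)
    rw [this]; linarith

private lemma exists_diag (A : Matrix (Fin n) (Fin n) ℝ) (hA : A.IsSymm) :
    ∃ (Q R : Matrix (Fin n) (Fin n) ℝ) (dvec : Fin n → ℝ),
      Q * R = 1 ∧ (∀ i j, R i j = Q j i) ∧ R * A * Q = Matrix.diagonal dvec := by
  have hH : A.IsHermitian := by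
    unfold Matrix.IsHermitian
    ext i j
    rw [Matrix.conjTranspose_apply, star_trivial, hA.apply i j]
  classical
  set Q : Matrix (Fin n) (Fin n) ℝ :=
    (Matrix.IsHermitian.eigenvectorUnitary hH : Matrix (Fin n) (Fin n) ℝ) with hQdef
  have hmem : Q ∈ Matrix.unitaryGroup (Fin n) ℝ := (Matrix.IsHermitian.eigenvectorUnitary hH).2
  refine ⟨Q, star Q, hH.eigenvalues, Matrix.mem_unitaryGroup_iff.mp hmem, ?_, ?_⟩
  · intro i j
    rw [Matrix.star_apply, star_trivial]
  · have hdiag : star Q * A * Q = Matrix.diagonal (RCLike.ofReal ∘ hH.eigenvalues) := by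
      have := Matrix.IsHermitian.conjStarAlgAut_star_eigenvectorUnitary hH
      rwa [Unitary.conjStarAlgAut_star_apply] at this
    rw [hdiag]
    congr 1

private lemma ipf_diagonal (dvec : Fin n → ℝ) :
    ipf (Matrix.diagonal dvec) (Matrix.diagonal dvec) = ∑ i, dvec i ^ 2 := by
  unfold ipf
  refine Finset.sum_congr rfl fun i _ => ?_
  rw [Finset.sum_eq_single i]
  · rw [Matrix.diagonal_apply_eq]; ring
  · intro j _ hj
    rw [Matrix.diagonal_apply_ne' _ hj]; ring
  · intro h; exact absurd (Finset.mem_univ i) h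

private lemma chi_diag (dvec : Fin n → ℝ) (C : Matrix (Fin n) (Fin n) ℝ) :
    chi (Matrix.diagonal dvec) C = ∑ i, ∑ j, (dvec i - dvec j)^2 * (C i j)^2 := by
  unfold chi ipf
  refine Finset.sum_congr rfl fun i _ => Finset.sum_congr rfl fun j _ => ?_
  rw [Matrix.sub_apply, Matrix.diagonal_mul, Matrix.mul_diagonal]
  ring

private lemma ipf_entry_sq (X : Matrix (Fin n) (Fin n) ℝ) :
    ipf X X = ∑ i, ∑ j, (X i j)^2 := by
  unfold ipf
  exact Finset.sum_congr rfl fun i _ => Finset.sum_congr rfl fun j _ => by ring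

private lemma ipf_std (X : Matrix (Fin n) (Fin n) ℝ) (i j : Fin n) :
    ipf X (Matrix.single i j 1 + Matrix.single j i 1) = X i j + X j i := by
  unfold ipf
  simp only [Matrix.add_apply, mul_add, Finset.sum_add_distrib]
  congr 1
  · simp [Matrix.single, Matrix.of_apply, mul_ite, mul_one, mul_zero, ite_and,
      Finset.sum_ite_eq, Finset.mem_univ, if_true]
  · simp [Matrix.single, Matrix.of_apply, mul_ite, mul_one, mul_zero, ite_and,
      Finset.sum_ite_eq, Finset.mem_univ, if_true]

private lemma key_cross (A : Matrix (Fin n) (Fin n) ℝ) (hA : A.IsSymm)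
    (T' : Finset (Fin p)) (B : Fin p → Matrix (Fin n) (Fin n) ℝ)
    (hsym : ∀ s ∈ T', (B s).IsSymm)
    (horth : ∀ s ∈ T', ∀ t ∈ T', s ≠ t → ipf (B s) (B t) = 0)
    (N2 : ℝ) (hN2pos : 0 < N2) (hN21 : N2 ≤ ipf A A)
    (hNs : ∀ s ∈ T', ipf (B s) (B s) ≤ N2) :
    ∑ s ∈ T', chi A (B s)
      ≤ (2 * ipf A A - N2) * (∑ s ∈ T', ipf (B s) (B s)) + N2^2 := by
  classical
  obtain ⟨Q, R, dvec, hQR, hR, hdiag⟩ := exists_diag A hA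
  set C : Fin p → Matrix (Fin n) (Fin n) ℝ := fun s => R * B s * Q with hC
  have hCipf : ∀ s t, ipf (C s) (C t) = ipf (B s) (B t) := fun s t =>
    lil_ipf_conj Q R hQR hR _ _
  have hCsym : ∀ s ∈ T', ∀ i j, C s j i = C s i j := by
    intro s hs i j
    have h1 : (C s)ᵀ = C s := by
      show (R * B s * Q)ᵀ = R * B s * Q
      rw [lil_conj_transpose Q R hR, (hsym s hs).eq]
    exact (Matrix.IsSymm.apply h1 i j)
  have hchi : ∀ s, chi A (B s) = chi (Matrix.diagonal dvec) (C s) := by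
    intro s
    rw [← hdiag]
    exact (chi_conj Q R hQR hR A (B s)).symm
  have hN1 : ipf A A = ∑ i, dvec i ^ 2 := by
    rw [← ipf_diagonal, ← hdiag, lil_ipf_conj Q R hQR hR]
  have hN1pos : 0 < ipf A A := lt_of_lt_of_le hN2pos hN21
  set cut : ℝ := 2 * ipf A A - N2 with hcut
  have hcutpos : 0 < cut := by rw [hcut]; linarith
  set ex : Fin n → Fin n → ℝ := fun i j => max ((dvec i - dvec j)^2 - cut) 0 with hex
  have hexnonneg : ∀ i j, 0 ≤ ex i j := fun i j => le_max_right _ _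
  have per_s : ∀ s ∈ T',
      chi A (B s) ≤ cut * ipf (B s) (B s) + ∑ i, ∑ j, ex i j * (C s i j)^2 := by
    intro s hs
    rw [hchi s, chi_diag]
    have hle : ∀ i j, (dvec i - dvec j)^2 * (C s i j)^2 ≤ (cut + ex i j) * (C s i j)^2 := by
      intro i j
      apply mul_le_mul_of_nonneg_right _ (sq_nonneg _)
      have h := le_max_left ((dvec i - dvec j)^2 - cut) 0
      have : (dvec i - dvec j)^2 - cut ≤ ex i j := h
      linarith
    calc ∑ i, ∑ j, (dvec i - dvec j)^2 * (C s i j)^2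
        ≤ ∑ i, ∑ j, (cut + ex i j) * (C s i j)^2 :=
          Finset.sum_le_sum fun i _ => Finset.sum_le_sum fun j _ => hle i j
      _ = (∑ i, ∑ j, cut * (C s i j)^2) + ∑ i, ∑ j, ex i j * (C s i j)^2 := by
          rw [← Finset.sum_add_distrib]
          refine Finset.sum_congr rfl fun i _ => ?_
          rw [← Finset.sum_add_distrib]
          exact Finset.sum_congr rfl fun j _ => by ring
      _ = cut * ipf (B s) (B s) + ∑ i, ∑ j, ex i j * (C s i j)^2 := by
          congr 1
          rw [← hCipf s s, ipf_entry_sq, Finset.mul_sum]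
          exact Finset.sum_congr rfl fun i _ => by rw [Finset.mul_sum]
  have hW : ∀ i j, i ≠ j → (∑ s ∈ T', (C s i j)^2) ≤ N2 / 2 := by
    intro i j hij
    set T'' := T'.filter (fun s => 0 < ipf (B s) (B s)) with hT''
    have hT''sub : T'' ⊆ T' := Finset.filter_subset _ _
    have hzero : ∀ s ∈ T', s ∉ T'' → C s i j = 0 := by
      intro s hs hns
      have h0 : ¬ (0 < ipf (B s) (B s)) := by
        intro hc; exact hns (Finset.mem_filter.mpr ⟨hs, hc⟩)
      push_neg at h0
      have h0' : ipf (C s) (C s) = 0 := by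
        rw [hCipf s s]
        exact le_antisymm h0 (ipf_self_nonneg _)
      have hCz := ipf_self_eq_zero h0'
      rw [hCz]
      rfl
    have hsplit : ∑ s ∈ T', (C s i j)^2 = ∑ s ∈ T'', (C s i j)^2 := by
      rw [← Finset.sum_filter_add_sum_filter_not T' (fun s => 0 < ipf (B s) (B s))
        (fun s => (C s i j)^2), ← hT'']
      have : ∑ s ∈ T'.filter (fun s => ¬ 0 < ipf (B s) (B s)), (C s i j)^2 = 0 := by
        apply Finset.sum_eq_zero
        intro s hs
        have hmem := Finset.mem_filter.mp hs
        have : C s i j = 0 := by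
          apply hzero s hmem.1
          intro hc
          exact hmem.2 (Finset.mem_filter.mp hc).2
        rw [this]; ring
      rw [this, add_zero]
    rw [hsplit]
    set u : Matrix (Fin n) (Fin n) ℝ :=
      Matrix.single i j 1 + Matrix.single j i 1 with hu
    have horth'' : ∀ s ∈ T'', ∀ t ∈ T'', s ≠ t → ipf (C s) (C t) = 0 := by
      intro s hs t ht hst
      rw [hCipf]
      exact horth s (hT''sub hs) t (hT''sub ht) hst
    have hpos'' : ∀ s ∈ T'', 0 < ipf (C s) (C s) := by
      intro s hs
      rw [hCipf]
      exact (Finset.mem_filter.mp hs).2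
    have hb := bessel T'' C horth'' hpos'' u
    have h1 : u i j = 1 := by
      rw [hu, Matrix.add_apply, Matrix.single_apply_same,
        Matrix.single_apply_of_ne]
      · ring
      · simp [hij]
    have h2 : u j i = 1 := by
      rw [hu, Matrix.add_apply]
      rw [show (Matrix.single i j (1:ℝ)) j i = 0 from
        Matrix.single_apply_of_ne _ _ _ _ _ (by simp [hij])]
      rw [Matrix.single_apply_same]
      ring
    have huu : ipf u u = 2 := by
      have := ipf_std u i j
      rw [← hu] at this
      rw [this, h1, h2]; norm_num
    have hCu : ∀ s ∈ T'', ipf (C s) u = 2 * C s i j := by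
      intro s hs
      rw [hu, ipf_std, hCsym s (hT''sub hs) i j]
      ring
    have hb2 : ∑ s ∈ T'', (C s i j)^2 / ipf (C s) (C s) ≤ 1/2 := by
      have heq : ∀ s ∈ T'', (ipf (C s) u)^2 / ipf (C s) (C s)
          = 4 * ((C s i j)^2 / ipf (C s) (C s)) := by
        intro s hs
        rw [hCu s hs]
        ring
      rw [Finset.sum_congr rfl heq, huu] at hb
      rw [← Finset.mul_sum] at hb
      linarith
    calc ∑ s ∈ T'', (C s i j)^2
        = ∑ s ∈ T'', ipf (C s) (C s) * ((C s i j)^2 / ipf (C s) (C s)) := by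
          refine Finset.sum_congr rfl fun s hs => ?_
          have hNe := (hpos'' s hs).ne'
          field_simp
      _ ≤ ∑ s ∈ T'', N2 * ((C s i j)^2 / ipf (C s) (C s)) := by
          refine Finset.sum_le_sum fun s hs => ?_
          apply mul_le_mul_of_nonneg_right
          · rw [hCipf]; exact hNs s (hT''sub hs)
          · exact div_nonneg (sq_nonneg _) (le_of_lt (hpos'' s hs))
      _ = N2 * ∑ s ∈ T'', ((C s i j)^2 / ipf (C s) (C s)) := by rw [Finset.mul_sum]
      _ ≤ N2 * (1/2) := by
          apply mul_le_mul_of_nonneg_left hb2 (le_of_lt hN2pos)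
      _ = N2 / 2 := by ring
  -- assemble
  have hexdiag : ∀ i, ex i i = 0 := by
    intro i
    rw [hex]
    simp only
    rw [max_eq_right]
    nlinarith [hcutpos]
  have swap_sum : ∑ s ∈ T', ∑ i, ∑ j, ex i j * (C s i j)^2
      = ∑ i, ∑ j, ex i j * (∑ s ∈ T', (C s i j)^2) := by
    rw [Finset.sum_comm]
    refine Finset.sum_congr rfl fun i _ => ?_
    rw [Finset.sum_comm]
    refine Finset.sum_congr rfl fun j _ => ?_
    rw [Finset.mul_sum]
  have hfsl := FSL dvec N2 hN2pos (by rw [← hN1]; exact hN21)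
  have hfsl' : ∑ i, ∑ j, ex i j ≤ 2 * N2 := by
    have : ∀ i j, ex i j = max ((dvec i - dvec j)^2 - (2 * (∑ k, dvec k ^ 2) - N2)) 0 := by
      intro i j
      rw [hex]
      simp only
      rw [hcut, hN1]
    rw [show (∑ i, ∑ j, ex i j) = ∑ i, ∑ j,
      max ((dvec i - dvec j)^2 - (2 * (∑ k, dvec k ^ 2) - N2)) 0 from
      Finset.sum_congr rfl fun i _ => Finset.sum_congr rfl fun j _ => this i j]
    exact hfsl
  calc ∑ s ∈ T', chi A (B s)
      ≤ ∑ s ∈ T', (cut * ipf (B s) (B s) + ∑ i, ∑ j, ex i j * (C s i j)^2) :=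
        Finset.sum_le_sum per_s
    _ = cut * (∑ s ∈ T', ipf (B s) (B s))
        + ∑ i, ∑ j, ex i j * (∑ s ∈ T', (C s i j)^2) := by
        rw [Finset.sum_add_distrib, ← Finset.mul_sum, swap_sum]
    _ ≤ cut * (∑ s ∈ T', ipf (B s) (B s)) + ∑ i, ∑ j, ex i j * (N2/2) := by
        apply add_le_add_right
        refine Finset.sum_le_sum fun i _ => Finset.sum_le_sum fun j _ => ?_
        by_cases hij : i = j
        · subst hij
          rw [hexdiag i]
          simp
        · exact mul_le_mul_of_nonneg_left (hW i j hij) (hexnonneg i j)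
    _ = cut * (∑ s ∈ T', ipf (B s) (B s)) + (∑ i, ∑ j, ex i j) * (N2/2) := by
        congr 1
        rw [Finset.sum_mul]
        exact Finset.sum_congr rfl fun i _ => by rw [Finset.sum_mul]
    _ ≤ cut * (∑ s ∈ T', ipf (B s) (B s)) + (2 * N2) * (N2/2) := by
        apply add_le_add_right
        apply mul_le_mul_of_nonneg_right hfsl'
        linarith
    _ = (2 * ipf A A - N2) * (∑ s ∈ T', ipf (B s) (B s)) + N2^2 := by
        rw [hcut]; ring

private lemma Lstar (B : Fin p → Matrix (Fin n) (Fin n) ℝ) (hsym : ∀ r, (B r).IsSymm) :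
    ∀ (T : Finset (Fin p)),
      (∀ r ∈ T, ∀ s ∈ T, r ≠ s → ipf (B r) (B s) = 0) →
      ∀ r₀ ∈ T, (∀ s ∈ T, ipf (B s) (B s) ≤ ipf (B r₀) (B r₀)) →
      (∑ r ∈ T, ∑ s ∈ T, chi (B r) (B s)) + ∑ r ∈ T, (ipf (B r) (B r))^2
        ≤ (3/2) * (∑ r ∈ T, ipf (B r) (B r))^2
          - (1/2) * ((∑ r ∈ T, ipf (B r) (B r)) - 2 * ipf (B r₀) (B r₀))^2 := by
  intro T
  induction T using Finset.strongInduction with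
  | _ T IH =>
    intro horth r₀ hr₀ hmax
    classical
    set T' := T.erase r₀ with hT'
    have hTT : T = insert r₀ T' := (Finset.insert_erase hr₀).symm
    have hr₀T' : r₀ ∉ T' := Finset.notMem_erase r₀ T
    have hsubT : ∀ s ∈ T', s ∈ T := fun s hs => Finset.mem_of_mem_erase hs
    set N1 := ipf (B r₀) (B r₀) with hN1def
    -- sum splittings
    have hsplitτ : ∑ r ∈ T, ipf (B r) (B r) = N1 + ∑ r ∈ T', ipf (B r) (B r) := by
      conv_lhs => rw [hTT]
      rw [Finset.sum_insert hr₀T']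
    have hsplity : ∑ r ∈ T, (ipf (B r) (B r))^2
        = N1^2 + ∑ r ∈ T', (ipf (B r) (B r))^2 := by
      conv_lhs => rw [hTT]
      rw [Finset.sum_insert hr₀T']
    have hsplitK : ∑ r ∈ T, ∑ s ∈ T, chi (B r) (B s)
        = (∑ r ∈ T', ∑ s ∈ T', chi (B r) (B s))
          + 2 * ∑ s ∈ T', chi (B r₀) (B s) := by
      conv_lhs => rw [hTT]
      rw [Finset.sum_insert hr₀T', Finset.sum_insert hr₀T', chi_self]
      have hrow : ∀ r ∈ T', ∑ s ∈ insert r₀ T', chi (B r) (B s)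
          = chi (B r) (B r₀) + ∑ s ∈ T', chi (B r) (B s) := by
        intro r _
        rw [Finset.sum_insert hr₀T']
      rw [Finset.sum_congr rfl hrow, Finset.sum_add_distrib]
      have hcomm : ∑ r ∈ T', chi (B r) (B r₀) = ∑ s ∈ T', chi (B r₀) (B s) :=
        Finset.sum_congr rfl fun r _ => chi_comm _ _
      rw [hcomm]
      ring
    rcases Finset.eq_empty_or_nonempty T' with hTe | hTne
    · -- singleton case
      rw [hsplitτ, hsplity, hsplitK, hTe]
      simp only [Finset.sum_empty]
      have h0 : (0:ℝ) + 2*0 + (N1^2 + 0) = N1^2 := by ring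
      nlinarith [sq_nonneg N1]
    · obtain ⟨r₁, hr₁T', hr₁max⟩ := Finset.exists_max_image T' (fun s => ipf (B s) (B s)) hTne
      set N2 := ipf (B r₁) (B r₁) with hN2def
      have hN2nonneg : 0 ≤ N2 := ipf_self_nonneg _
      have hN21 : N2 ≤ N1 := hmax r₁ (hsubT r₁ hr₁T')
      have horth' : ∀ r ∈ T', ∀ s ∈ T', r ≠ s → ipf (B r) (B s) = 0 :=
        fun r hr s hs hrs => horth r (hsubT r hr) s (hsubT s hs) hrs
      have IH' := IH T' (Finset.erase_ssubset hr₀) horth' r₁ hr₁T' hr₁max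
      have cross_bound : ∑ s ∈ T', chi (B r₀) (B s)
          ≤ (2 * N1 - N2) * (∑ s ∈ T', ipf (B s) (B s)) + N2^2 := by
        rcases lt_or_ge 0 N2 with hpos | hle
        · exact key_cross (B r₀) (hsym r₀) T' B (fun s _ => hsym s) horth' N2 hpos hN21
            hr₁max
        · have hN2z : N2 = 0 := le_antisymm hle hN2nonneg
          have hzero : ∀ s ∈ T', B s = 0 := by
            intro s hs
            apply ipf_self_eq_zero
            have h1 := hr₁max s hs
            have h2 := ipf_self_nonneg (B s)
            linarith
          have hc : ∑ s ∈ T', chi (B r₀) (B s) = 0 := by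
            apply Finset.sum_eq_zero
            intro s hs
            rw [hzero s hs, chi_zero_right]
          have hi : ∑ s ∈ T', ipf (B s) (B s) = 0 := by
            apply Finset.sum_eq_zero
            intro s hs
            rw [hzero s hs]
            have : ipf (0 : Matrix (Fin n) (Fin n) ℝ) 0 = 0 := by
              simp [ipf]
            exact this
          rw [hc, hi, hN2z]
          norm_num
      -- final arithmetic
      set Sig := ∑ s ∈ T', ipf (B s) (B s) with hSig
      have hring : (3/2) * (N1 + Sig)^2 - (1/2) * ((N1 + Sig) - 2*N1)^2
          = ((3/2) * Sig^2 - (1/2) * (Sig - 2*N2)^2)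
            + 2 * ((2*N1 - N2) * Sig + N2^2) + N1^2 := by ring
      rw [hsplitτ, hsplity, hsplitK]
      calc (∑ r ∈ T', ∑ s ∈ T', chi (B r) (B s)) + 2 * ∑ s ∈ T', chi (B r₀) (B s)
            + (N1^2 + ∑ r ∈ T', (ipf (B r) (B r))^2)
          ≤ ((3/2) * Sig^2 - (1/2) * (Sig - 2*N2)^2)
            + 2 * ((2*N1 - N2) * Sig + N2^2) + N1^2 := by
            have := IH'
            linarith [cross_bound, IH']
        _ = (3/2) * (N1 + Sig)^2 - (1/2) * ((N1 + Sig) - 2*N1)^2 := hring.symm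


end LiLiProof

theorem li_li_inequality (n p : ℕ)
    (B : Fin p → Matrix (Fin n) (Fin n) ℝ) (hsymm : ∀ r, (B r).IsSymm) :
    ∑ r, ∑ s, Matrix.trace ((B r * B s - B s * B r) * (B r * B s - B s * B r)ᵀ)
      + ∑ r, ∑ s, (Matrix.trace (B r * B s)) ^ 2 ≤
      (1 + (1 / 2) * (if p ≤ 1 then (0 : ℝ) else 1)) *
        (∑ r, Matrix.trace (B r * (B r)ᵀ)) ^ 2 := by
  classical
  have hK : ∀ r s : Fin p, Matrix.trace ((B r * B s - B s * B r) * (B r * B s - B s * B r)ᵀ)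
      = chi (B r) (B s) := fun r s => trace_mul_transpose' _ _
  have hS : ∀ r s : Fin p, Matrix.trace (B r * B s) = ipf (B r) (B s) :=
    fun r s => trace_mul_symm _ _ (hsymm s)
  have hN : ∀ r : Fin p, Matrix.trace (B r * (B r)ᵀ) = ipf (B r) (B r) :=
    fun r => trace_mul_transpose' _ _
  simp only [hK, hS, hN]
  by_cases hp : p ≤ 1
  · rw [if_pos hp]
    interval_cases p
    · simp
    · simp only [Fin.sum_univ_one, chi_self]
      norm_num
  · rw [if_neg hp]
    have hne : (univ : Finset (Fin p)).Nonempty := by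
      have : 0 < p := by omega
      exact ⟨⟨0, this⟩, mem_univ _⟩
    set S : Matrix (Fin p) (Fin p) ℝ := Matrix.of (fun r s => ipf (B r) (B s)) with hSdef
    have hSsymm : S.IsSymm := Matrix.IsSymm.ext fun r s => ipf_comm (B s) (B r)
    obtain ⟨W, hW, hdiag⟩ := exists_gram_diag S hSsymm
    set B' := rotB W B with hB'
    have hsym' : ∀ r, (B' r).IsSymm := fun r => rotB_isSymm W B hsymm r
    have horth' : ∀ r ∈ (univ : Finset (Fin p)), ∀ s ∈ (univ : Finset (Fin p)),
        r ≠ s → ipf (B' r) (B' s) = 0 := by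
      intro r _ s _ hrs
      rw [hB', ipf_rotB]
      exact hdiag r s hrs
    obtain ⟨r₀, _, hmax⟩ := Finset.exists_max_image univ (fun r => ipf (B' r) (B' r)) hne
    have hLs := Lstar B' hsym' univ horth' r₀ (mem_univ r₀) (fun s _ => hmax s (mem_univ s))
    have hτ : ∑ r, ipf (B' r) (B' r) = ∑ a, ipf (B a) (B a) := tau_rot W B hW
    have hy : ∑ r, ∑ s, (ipf (B' r) (B' s))^2 = ∑ a, ∑ b, (ipf (B a) (B b))^2 := y_rot W B hW
    have hKi : ∑ r, ∑ s, chi (B' r) (B' s) = ∑ a, ∑ b, chi (B a) (B b) := K_rot W B hW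
    have hydiag : ∑ r, ∑ s, (ipf (B' r) (B' s))^2 = ∑ r, (ipf (B' r) (B' r))^2 := by
      refine Finset.sum_congr rfl fun r _ => ?_
      rw [Finset.sum_eq_single r]
      · intro s _ hsr
        rw [horth' r (mem_univ r) s (mem_univ s) (Ne.symm hsr)]
        ring
      · intro h; exact absurd (mem_univ r) h
    have hfinal : (∑ r, ∑ s, chi (B r) (B s)) + ∑ r, ∑ s, (ipf (B r) (B s))^2
        ≤ (3/2) * (∑ r, ipf (B r) (B r))^2 := by
      rw [← hKi, ← hy, hydiag, ← hτ]
      have h2 := hLs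
      nlinarith [sq_nonneg ((∑ r, ipf (B' r) (B' r)) - 2 * ipf (B' r₀) (B' r₀))]
    have hco : (1 + (1/2:ℝ) * 1) = 3/2 := by norm_num
    rw [hco]
    exact hfinal
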